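/- arXiv:2204.06027 — 2 statements merged into one kernel-verified Lean document; each statement's English description precedes it below -/
import Mathlib

section
/- For any double complex A of complex vector spaces and any integers p, q, there is a natural isomorphism H^{p+q−2}(L_{p,q}(A)) ≅ ker(∂∂̄ : A^{p−1,q−1} → A^{p,q}) / (∂(A^{p−2,q−1}) + ∂̄(A^{p−1,q−2})), i.e. the (p+q−2)-nd cohomology of the Schweitzer complex is the Aeppli cohomology of A in bidegree (p−1,q−1). -/
open DirectSum

/-- A double complex of complex vector spaces: a family of `ℂ`-vector spaces `X r s`
(`r, s ∈ ℤ`) with differentials `∂ : X r s → X (r+1) s` and `∂̄ : X r s → X r (s+1)`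
satisfying `∂∘∂ = 0`, `∂̄∘∂̄ = 0` and `∂∘∂̄ + ∂̄∘∂ = 0`. -/
structure DoubleComplex : Type 1 where
  X : ℤ → ℤ → Type
  [acg : ∀ r s, AddCommGroup (X r s)]
  [mod : ∀ r s, Module ℂ (X r s)]
  d1 : ∀ r s, X r s →ₗ[ℂ] X (r + 1) s
  d2 : ∀ r s, X r s →ₗ[ℂ] X r (s + 1)
  d1_d1 : ∀ r s (x : X r s), d1 (r + 1) s (d1 r s x) = 0
  d2_d2 : ∀ r s (x : X r s), d2 r (s + 1) (d2 r s x) = 0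
  anticomm : ∀ r s (x : X r s), d1 r (s + 1) (d2 r s x) + d2 (r + 1) s (d1 r s x) = 0

attribute [instance] DoubleComplex.acg DoubleComplex.mod

/-- The bidegrees contributing to the degree-`k` piece of the Schweitzer complex `L_{p,q}`:
for `k ≤ p+q-2` the bidegrees `(r,s)` with `r+s = k`, `r < p`, `s < q`; for `k ≥ p+q-1`
the bidegrees `(r,s)` with `r+s = k+1`, `r ≥ p`, `s ≥ q`. -/
def schwCond (p q k : ℤ) (rs : ℤ × ℤ) : Prop :=
  (k ≤ p + q - 2 ∧ rs.1 + rs.2 = k ∧ rs.1 < p ∧ rs.2 < q) ∨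
  (p + q - 1 ≤ k ∧ rs.1 + rs.2 = k + 1 ∧ p ≤ rs.1 ∧ q ≤ rs.2)

instance (p q k : ℤ) : DecidablePred (schwCond p q k) := fun rs => by
  unfold schwCond; infer_instance

/-- Index type for the degree-`k` piece of the Schweitzer complex. -/
abbrev SchwIdx (p q k : ℤ) := {rs : ℤ × ℤ // schwCond p q k rs}

/-- The degree-`k` piece of the Schweitzer complex `L_{p,q}(A)`. -/
abbrev SchwL (A : DoubleComplex) (p q k : ℤ) : Type :=
  ⨁ i : SchwIdx p q k, A.X i.1.1 i.1.2

/-- The differential of the Schweitzer complex: in degrees `k ≤ p+q-3` the total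
differential `∂ + ∂̄` followed by the projection to the components of `L^{k+1}`;
in degree `p+q-2` the map `∂∂̄ : A^{p-1,q-1} → A^{p,q}`; in degrees `k ≥ p+q-1`
the total differential `∂ + ∂̄`. -/
noncomputable def schwD (A : DoubleComplex) (p q k : ℤ) :
    SchwL A p q k →ₗ[ℂ] SchwL A p q (k + 1) :=
  DirectSum.toModule ℂ _ _ fun i =>
    if _hk : k = p + q - 2 then
      (DirectSum.lof ℂ (SchwIdx p q (k + 1)) (fun j => A.X j.1.1 j.1.2)
        ⟨(i.1.1 + 1, i.1.2 + 1), by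
          obtain ⟨⟨r, s⟩, hi⟩ := i
          simp only [schwCond] at hi ⊢
          omega⟩).comp ((A.d1 i.1.1 (i.1.2 + 1)).comp (A.d2 i.1.1 i.1.2))
    else
      (if h : schwCond p q (k + 1) (i.1.1 + 1, i.1.2) then
        (DirectSum.lof ℂ (SchwIdx p q (k + 1)) (fun j => A.X j.1.1 j.1.2)
          ⟨(i.1.1 + 1, i.1.2), h⟩).comp (A.d1 i.1.1 i.1.2)
       else 0)
      +
      (if h : schwCond p q (k + 1) (i.1.1, i.1.2 + 1) then
        (DirectSum.lof ℂ (SchwIdx p q (k + 1)) (fun j => A.X j.1.1 j.1.2)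
          ⟨(i.1.1, i.1.2 + 1), h⟩).comp (A.d2 i.1.1 i.1.2)
       else 0)

/-- Transport of the pieces of the Schweitzer complex along an equality of degrees. -/
def schwLCast (A : DoubleComplex) (p q : ℤ) {k k' : ℤ} (h : k = k') :
    SchwL A p q k ≃ₗ[ℂ] SchwL A p q k' := by subst h; exact LinearEquiv.refl ℂ _

/-- The differential of the Schweitzer complex arriving in degree `k`. -/
noncomputable def schwDFrom (A : DoubleComplex) (p q k : ℤ) :
    SchwL A p q (k - 1) →ₗ[ℂ] SchwL A p q k :=
  (schwLCast A p q (by omega : k - 1 + 1 = k)).toLinearMap.comp (schwD A p q (k - 1))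

/-- The `k`-th cohomology of the Schweitzer complex `L_{p,q}(A)`:
`ker(d^k) / im(d^{k-1})`. -/
noncomputable abbrev SchwCoh (A : DoubleComplex) (p q k : ℤ) : Type :=
  LinearMap.ker (schwD A p q k) ⧸
    Submodule.comap (LinearMap.ker (schwD A p q k)).subtype
      (LinearMap.range (schwDFrom A p q k))


/-- Transport of the components of a double complex along equalities of bidegrees. -/
noncomputable def DoubleComplex.castX (A : DoubleComplex) {r s r' s' : ℤ}
    (h1 : r = r') (h2 : s = s') : A.X r s ≃ₗ[ℂ] A.X r' s' := by
  subst h1; subst h2; exact LinearEquiv.refl ℂ _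

/-- The operator `∂∂̄ : A^{p-1,q-1} → A^{p,q}`. -/
noncomputable def ddbar (A : DoubleComplex) (p q : ℤ) :
    A.X (p - 1) (q - 1) →ₗ[ℂ] A.X p q :=
  (A.castX (show p - 1 + 1 = p by omega) (show q - 1 + 1 = q by omega)).toLinearMap.comp
    ((A.d1 (p - 1) (q - 1 + 1)).comp (A.d2 (p - 1) (q - 1)))

/-- The Aeppli cohomology of a double complex in bidegree `(p-1,q-1)`:
`ker ∂∂̄ / (im ∂ + im ∂̄)` at `A^{p-1,q-1}`. -/
noncomputable abbrev Aeppli (A : DoubleComplex) (p q : ℤ) : Type :=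
  ↥(LinearMap.ker (ddbar A p q)) ⧸
    Submodule.comap (LinearMap.ker (ddbar A p q)).subtype
      (LinearMap.range ((A.castX (show p - 2 + 1 = p - 1 by omega) rfl).toLinearMap.comp
          (A.d1 (p - 2) (q - 1))) ⊔
        LinearMap.range ((A.castX rfl (show q - 2 + 1 = q - 1 by omega)).toLinearMap.comp
          (A.d2 (p - 1) (q - 2))))

section SchwAux

open DirectSum

lemma schwCond_iff (p q k r s : ℤ) :
    schwCond p q k (r, s) ↔
      (k ≤ p + q - 2 ∧ r + s = k ∧ r < p ∧ s < q) ∨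
      (p + q - 1 ≤ k ∧ r + s = k + 1 ∧ p ≤ r ∧ q ≤ s) := Iff.rfl

/-- Moving a `lof` along equal bidegrees. -/
lemma lof_castX (A : DoubleComplex) {p q k r s r' s' : ℤ} (h1 : r = r') (h2 : s = s')
    (hi : schwCond p q k (r, s)) (hj : schwCond p q k (r', s')) (x : A.X r s) :
    DirectSum.lof ℂ (SchwIdx p q k) (fun j => A.X j.1.1 j.1.2) ⟨(r, s), hi⟩ x =
      DirectSum.lof ℂ (SchwIdx p q k) (fun j => A.X j.1.1 j.1.2) ⟨(r', s'), hj⟩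
        (A.castX h1 h2 x) := by
  subst h1; subst h2; rfl

lemma schwLCast_lof (A : DoubleComplex) (p q : ℤ) {k k' : ℤ} (h : k = k')
    (i : SchwIdx p q k) (x : A.X i.1.1 i.1.2) :
    schwLCast A p q h (DirectSum.lof ℂ (SchwIdx p q k) (fun j => A.X j.1.1 j.1.2) i x) =
      DirectSum.lof ℂ (SchwIdx p q k') (fun j => A.X j.1.1 j.1.2) ⟨i.1, h ▸ i.2⟩ x := by
  subst h; rfl

/-- The direct sum over a single-element index set. -/
noncomputable def schwProj (A : DoubleComplex) (p q k : ℤ) (i0 : SchwIdx p q k)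
    (huniq : ∀ j : SchwIdx p q k, j = i0) :
    SchwL A p q k ≃ₗ[ℂ] A.X i0.1.1 i0.1.2 :=
  LinearEquiv.ofLinear
    (DirectSum.component ℂ (SchwIdx p q k) (fun j => A.X j.1.1 j.1.2) i0)
    (DirectSum.lof ℂ (SchwIdx p q k) (fun j => A.X j.1.1 j.1.2) i0)
    (by ext x; simp)
    (by
      refine DirectSum.linearMap_ext ℂ fun j => ?_
      obtain rfl := huniq j
      ext x
      simp)

abbrev schwI0 (p q : ℤ) : SchwIdx p q (p + q - 2) :=
  ⟨(p - 1, q - 1), (schwCond_iff p q _ _ _).mpr (by omega)⟩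

abbrev schwJ0 (p q : ℤ) : SchwIdx p q (p + q - 2 + 1) :=
  ⟨(p - 1 + 1, q - 1 + 1), (schwCond_iff p q _ _ _).mpr (by omega)⟩

abbrev schwA1 (p q : ℤ) : SchwIdx p q (p + q - 2 - 1) :=
  ⟨(p - 2, q - 1), (schwCond_iff p q _ _ _).mpr (by omega)⟩

abbrev schwA2 (p q : ℤ) : SchwIdx p q (p + q - 2 - 1) :=
  ⟨(p - 1, q - 2), (schwCond_iff p q _ _ _).mpr (by omega)⟩

lemma schwI0_uniq (p q : ℤ) (j : SchwIdx p q (p + q - 2)) : j = schwI0 p q := by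
  obtain ⟨⟨r, s⟩, hj⟩ := j
  rw [schwCond_iff] at hj
  have hr : r = p - 1 := by omega
  have hs : s = q - 1 := by omega
  subst hr; subst hs; rfl

lemma schwJ0_uniq (p q : ℤ) (j : SchwIdx p q (p + q - 2 + 1)) : j = schwJ0 p q := by
  obtain ⟨⟨r, s⟩, hj⟩ := j
  rw [schwCond_iff] at hj
  have hr : r = p - 1 + 1 := by omega
  have hs : s = q - 1 + 1 := by omega
  subst hr; subst hs; rfl

lemma schwLow_cases (p q : ℤ) (j : SchwIdx p q (p + q - 2 - 1)) :
    j = schwA1 p q ∨ j = schwA2 p q := by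
  obtain ⟨⟨r, s⟩, hj⟩ := j
  rw [schwCond_iff] at hj
  have : (r = p - 2 ∧ s = q - 1) ∨ (r = p - 1 ∧ s = q - 2) := by omega
  rcases this with ⟨hr, hs⟩ | ⟨hr, hs⟩
  · left; subst hr; subst hs; rfl
  · right; subst hr; subst hs; rfl

noncomputable def eMid (A : DoubleComplex) (p q : ℤ) :
    SchwL A p q (p + q - 2) ≃ₗ[ℂ] A.X (p - 1) (q - 1) :=
  schwProj A p q _ (schwI0 p q) (schwI0_uniq p q)

noncomputable def eTop (A : DoubleComplex) (p q : ℤ) :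
    SchwL A p q (p + q - 2 + 1) ≃ₗ[ℂ] A.X (p - 1 + 1) (q - 1 + 1) :=
  schwProj A p q _ (schwJ0 p q) (schwJ0_uniq p q)

lemma eMid_lof (A : DoubleComplex) (p q : ℤ) (h : schwCond p q (p + q - 2) (p - 1, q - 1))
    (x : A.X (p - 1) (q - 1)) :
    eMid A p q (DirectSum.lof ℂ (SchwIdx p q (p + q - 2))
      (fun j => A.X j.1.1 j.1.2) ⟨(p - 1, q - 1), h⟩ x) = x := by
  simp only [eMid, schwProj, LinearEquiv.ofLinear_apply]
  exact DirectSum.component.lof_self (R := ℂ) (M := fun j : SchwIdx p q (p + q - 2) => A.X j.1.1 j.1.2) (schwI0 p q) x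

lemma eTop_lof (A : DoubleComplex) (p q : ℤ)
    (h : schwCond p q (p + q - 2 + 1) (p - 1 + 1, q - 1 + 1))
    (x : A.X (p - 1 + 1) (q - 1 + 1)) :
    eTop A p q (DirectSum.lof ℂ (SchwIdx p q (p + q - 2 + 1))
      (fun j => A.X j.1.1 j.1.2) ⟨(p - 1 + 1, q - 1 + 1), h⟩ x) = x := by
  simp only [eTop, schwProj, LinearEquiv.ofLinear_apply]
  exact DirectSum.component.lof_self (R := ℂ) (M := fun j : SchwIdx p q (p + q - 2 + 1) => A.X j.1.1 j.1.2) (schwJ0 p q) x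

end SchwAux

section SchwComp

open DirectSum

lemma schwD_mid (A : DoubleComplex) (p q : ℤ) :
    (eTop A p q).toLinearMap ∘ₗ schwD A p q (p + q - 2) =
      ((A.d1 (p - 1) (q - 1 + 1)) ∘ₗ (A.d2 (p - 1) (q - 1))) ∘ₗ (eMid A p q).toLinearMap := by
  refine DirectSum.linearMap_ext ℂ fun j => ?_
  obtain rfl := schwI0_uniq p q j
  ext x
  simp only [LinearMap.comp_apply, LinearEquiv.coe_coe, schwD, DirectSum.toModule_lof]
  rw [dif_pos trivial]
  simp only [LinearMap.comp_apply]
  rw [eTop_lof A p q]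
  congr 2
  exact (eMid_lof A p q _ x).symm

lemma schwDFrom_a1 (A : DoubleComplex) (p q : ℤ) (x : A.X (p - 2) (q - 1)) :
    eMid A p q (schwDFrom A p q (p + q - 2)
        (DirectSum.lof ℂ (SchwIdx p q (p + q - 2 - 1))
          (fun j => A.X j.1.1 j.1.2) (schwA1 p q) x)) =
      A.castX (show p - 2 + 1 = p - 1 by omega) rfl (A.d1 (p - 2) (q - 1) x) := by
  simp only [schwDFrom, LinearMap.comp_apply, LinearEquiv.coe_coe, schwD,
    DirectSum.toModule_lof]
  rw [dif_neg (show ¬(p + q - 2 - 1 = p + q - 2) by omega)]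
  rw [dif_pos (show schwCond p q (p + q - 2 - 1 + 1) (p - 2 + 1, q - 1) from
        (schwCond_iff p q _ _ _).mpr (by omega)),
    dif_neg (show ¬ schwCond p q (p + q - 2 - 1 + 1) (p - 2, q - 1 + 1) from by
        rw [schwCond_iff]; omega)]
  simp only [LinearMap.add_apply, LinearMap.zero_apply, add_zero, LinearMap.comp_apply]
  rw [schwLCast_lof]
  rw [lof_castX A (show p - 2 + 1 = p - 1 by omega) rfl _
      ((schwCond_iff p q _ _ _).mpr (by omega))]
  exact eMid_lof A p q ((schwCond_iff p q _ _ _).mpr (by omega)) _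

lemma schwDFrom_a2 (A : DoubleComplex) (p q : ℤ) (x : A.X (p - 1) (q - 2)) :
    eMid A p q (schwDFrom A p q (p + q - 2)
        (DirectSum.lof ℂ (SchwIdx p q (p + q - 2 - 1))
          (fun j => A.X j.1.1 j.1.2) (schwA2 p q) x)) =
      A.castX rfl (show q - 2 + 1 = q - 1 by omega) (A.d2 (p - 1) (q - 2) x) := by
  simp only [schwDFrom, LinearMap.comp_apply, LinearEquiv.coe_coe, schwD,
    DirectSum.toModule_lof]
  rw [dif_neg (show ¬(p + q - 2 - 1 = p + q - 2) by omega)]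
  rw [dif_neg (show ¬ schwCond p q (p + q - 2 - 1 + 1) (p - 1 + 1, q - 2) from by
        rw [schwCond_iff]; omega),
    dif_pos (show schwCond p q (p + q - 2 - 1 + 1) (p - 1, q - 2 + 1) from
        (schwCond_iff p q _ _ _).mpr (by omega))]
  simp only [LinearMap.add_apply, LinearMap.zero_apply, zero_add, LinearMap.comp_apply]
  rw [schwLCast_lof]
  rw [lof_castX A rfl (show q - 2 + 1 = q - 1 by omega) _
      ((schwCond_iff p q _ _ _).mpr (by omega))]
  exact eMid_lof A p q ((schwCond_iff p q _ _ _).mpr (by omega)) _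

end SchwComp

/-- The `(p+q-2)`-nd cohomology of the Schweitzer complex `L_{p,q}(A)` is the
Aeppli cohomology of `A` in bidegree `(p-1,q-1)`:
`ker(∂∂̄ : A^{p-1,q-1} → A^{p,q}) / (∂ A^{p-2,q-1} + ∂̄ A^{p-1,q-2})`. -/
theorem schwCoh_aeppli (A : DoubleComplex) (p q : ℤ) :
    Nonempty (SchwCoh A p q (p + q - 2) ≃ₗ[ℂ] Aeppli A p q) := by
  classical
  have hker : ∀ x : SchwL A p q (p + q - 2),
      schwD A p q (p + q - 2) x = 0 ↔ ddbar A p q (eMid A p q x) = 0 := by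
    intro x
    have h := LinearMap.congr_fun (schwD_mid A p q) x
    simp only [LinearMap.comp_apply, LinearEquiv.coe_coe] at h
    rw [ddbar]
    simp only [LinearMap.comp_apply, LinearEquiv.coe_coe]
    rw [← h, (A.castX _ _).map_eq_zero_iff, (eTop A p q).map_eq_zero_iff]
  have hrange : Submodule.map
      ((eMid A p q : SchwL A p q (p + q - 2) ≃ₗ[ℂ] A.X (p - 1) (q - 1)) :
        SchwL A p q (p + q - 2) →ₗ[ℂ] A.X (p - 1) (q - 1))
      (LinearMap.range (schwDFrom A p q (p + q - 2))) =
      LinearMap.range ((A.castX (show p - 2 + 1 = p - 1 by omega) rfl).toLinearMap ∘ₗ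
          A.d1 (p - 2) (q - 1)) ⊔
        LinearMap.range ((A.castX rfl (show q - 2 + 1 = q - 1 by omega)).toLinearMap ∘ₗ
          A.d2 (p - 1) (q - 2)) := by
    apply le_antisymm
    · rintro _ ⟨_, ⟨x, rfl⟩, rfl⟩
      simp only [LinearEquiv.coe_coe]
      induction x using DirectSum.induction_on with
      | zero => simp
      | of j y =>
          rcases schwLow_cases p q j with rfl | rfl
          · rw [← DirectSum.lof_eq_of ℂ, schwDFrom_a1]
            exact Submodule.mem_sup_left (LinearMap.mem_range_self _ y)
          · rw [← DirectSum.lof_eq_of ℂ, schwDFrom_a2]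
            exact Submodule.mem_sup_right (LinearMap.mem_range_self _ y)
      | add a b ha hb =>
          rw [map_add, map_add]
          exact add_mem ha hb
    · rw [sup_le_iff]
      constructor
      · rintro _ ⟨x, rfl⟩
        exact Submodule.mem_map.mpr ⟨_, LinearMap.mem_range_self _ _, schwDFrom_a1 A p q x⟩
      · rintro _ ⟨x, rfl⟩
        exact Submodule.mem_map.mpr ⟨_, LinearMap.mem_range_self _ _, schwDFrom_a2 A p q x⟩
  have hkercomap : LinearMap.ker (schwD A p q (p + q - 2)) =
      Submodule.comap ((eMid A p q : SchwL A p q (p + q - 2) ≃ₗ[ℂ] A.X (p - 1) (q - 1)) :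
        SchwL A p q (p + q - 2) →ₗ[ℂ] A.X (p - 1) (q - 1)) (LinearMap.ker (ddbar A p q)) := by
    ext x
    simpa [LinearMap.mem_ker] using hker x
  have hmapker : Submodule.map ((eMid A p q : SchwL A p q (p + q - 2) ≃ₗ[ℂ]
        A.X (p - 1) (q - 1)) : SchwL A p q (p + q - 2) →ₗ[ℂ] A.X (p - 1) (q - 1))
      (LinearMap.ker (schwD A p q (p + q - 2))) = LinearMap.ker (ddbar A p q) := by
    rw [hkercomap]
    exact Submodule.map_comap_eq_of_surjective (eMid A p q).surjective _
  refine ⟨Submodule.Quotient.equiv _ _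
    (((eMid A p q).submoduleMap _).trans (LinearEquiv.ofEq _ _ hmapker)) ?_⟩
  ext z
  constructor
  · rintro ⟨w, hw, rfl⟩
    simp only [Submodule.mem_comap, Submodule.coe_subtype]
    have hco : (((((eMid A p q).submoduleMap (LinearMap.ker (schwD A p q (p + q - 2))))).trans
        (LinearEquiv.ofEq _ _ hmapker)) w : A.X (p - 1) (q - 1)) =
        eMid A p q (w : SchwL A p q (p + q - 2)) := rfl
    rw [LinearEquiv.coe_coe, hco, ← hrange]
    exact Submodule.mem_map_of_mem hw
  · intro hz2
    simp only [Submodule.mem_comap, Submodule.coe_subtype] at hz2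
    rw [← hrange] at hz2
    obtain ⟨u, hu, hu2⟩ := hz2
    simp only [LinearEquiv.coe_coe] at hu2
    refine ⟨⟨u, ?_⟩, hu, ?_⟩
    · rw [LinearMap.mem_ker, hker, hu2]
      exact z.2
    · apply Subtype.ext
      exact hu2
end

section
/- Let U and W be finite-dimensional complex vector spaces, α ∈ U and β ∈ W nonzero, and a, b ≥ 0. If ω ∈ Λ^a U ⊗ Λ^b W satisfies L_α L_β ω = 0, then there exist η₁ ∈ Λ^{a−1} U ⊗ Λ^b W and η₂ ∈ Λ^a U ⊗ Λ^{b−1} W with ω = L_α η₁ + L_β η₂. (Exactness of the symbol complex of the Schweitzer complex in the Aeppli degree.) -/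
open scoped TensorProduct
set_option synthInstance.maxHeartbeats 1000000
set_option maxHeartbeats 4000000

variable {U W : Type} [AddCommGroup U] [Module ℂ U] [AddCommGroup W] [Module ℂ W]

/-- Left wedge multiplication `L_α = α ∧ -` on exterior powers. -/
noncomputable def Lmul (α : U) (a : ℕ) : ⋀[ℂ]^a U →ₗ[ℂ] ⋀[ℂ]^(a + 1) U :=
  (LinearMap.mulLeft ℂ (ExteriorAlgebra.ι ℂ α)).restrict fun x hx => by
    have h1 : ExteriorAlgebra.ι ℂ α ∈ ⋀[ℂ]^1 U := by
      show ExteriorAlgebra.ι ℂ α ∈ LinearMap.range (ExteriorAlgebra.ι ℂ (M := U)) ^ 1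
      rw [pow_one]; exact LinearMap.mem_range_self _ α
    exact (Nat.add_comm 1 a) ▸ SetLike.mul_mem_graded h1 hx

lemma Lmul_Lmul (α : U) (a : ℕ) (x : ⋀[ℂ]^a U) :
    Lmul α (a + 1) (Lmul α a x) = 0 := by
  apply Subtype.ext
  show ExteriorAlgebra.ι ℂ α * (ExteriorAlgebra.ι ℂ α * (x : ExteriorAlgebra ℂ U)) = 0
  rw [← mul_assoc, ExteriorAlgebra.ι_sq_zero, zero_mul]

/-- `BX U W r s = Λ^r U ⊗ Λ^s W` for `r, s ≥ 0`, and the zero space otherwise. -/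
noncomputable def BX (U W : Type) [AddCommGroup U] [Module ℂ U] [AddCommGroup W] [Module ℂ W] :
    ℤ → ℤ → Type
  | Int.ofNat a, Int.ofNat b => ⋀[ℂ]^a U ⊗[ℂ] ⋀[ℂ]^b W
  | Int.ofNat _, Int.negSucc _ => PUnit
  | Int.negSucc _, _ => PUnit

noncomputable instance : ∀ r s, AddCommGroup (BX U W r s)
  | Int.ofNat a, Int.ofNat b => inferInstanceAs (AddCommGroup (⋀[ℂ]^a U ⊗[ℂ] ⋀[ℂ]^b W))
  | Int.ofNat _, Int.negSucc _ => inferInstanceAs (AddCommGroup PUnit)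
  | Int.negSucc _, Int.ofNat _ => inferInstanceAs (AddCommGroup PUnit)
  | Int.negSucc _, Int.negSucc _ => inferInstanceAs (AddCommGroup PUnit)

noncomputable instance : ∀ r s, Module ℂ (BX U W r s)
  | Int.ofNat a, Int.ofNat b => inferInstanceAs (Module ℂ (⋀[ℂ]^a U ⊗[ℂ] ⋀[ℂ]^b W))
  | Int.ofNat _, Int.negSucc _ => inferInstanceAs (Module ℂ PUnit)
  | Int.negSucc _, Int.ofNat _ => inferInstanceAs (Module ℂ PUnit)
  | Int.negSucc _, Int.negSucc _ => inferInstanceAs (Module ℂ PUnit)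

/-- The operator `L_α = (α ∧ -) ⊗ id` on `BX U W`. -/
noncomputable def Bd1 (α : U) : ∀ r s, BX U W r s →ₗ[ℂ] BX U W (r + 1) s
  | Int.ofNat a, Int.ofNat b => TensorProduct.map (Lmul α a) (LinearMap.id (M := ⋀[ℂ]^b W))
  | Int.ofNat _, Int.negSucc _ => 0
  | Int.negSucc _, _ => 0

/-- The operator `L_β = id ⊗ (β ∧ -)` on `BX U W`. -/
noncomputable def Bd2u (β : W) : ∀ r s, BX U W r s →ₗ[ℂ] BX U W r (s + 1)
  | Int.ofNat a, Int.ofNat b => TensorProduct.map (LinearMap.id (M := ⋀[ℂ]^a U)) (Lmul β b)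
  | Int.ofNat _, Int.negSucc _ => 0
  | Int.negSucc _, _ => 0

/-- The signed operator `(-1)^r L_β = (-1)^r (id ⊗ (β ∧ -))` on `BX U W`. -/
noncomputable def Bd2s (β : W) : ∀ r s, BX U W r s →ₗ[ℂ] BX U W r (s + 1)
  | Int.ofNat a, Int.ofNat b =>
      ((-1 : ℂ) ^ a) • TensorProduct.map (LinearMap.id (M := ⋀[ℂ]^a U)) (Lmul β b)
  | Int.ofNat _, Int.negSucc _ => 0
  | Int.negSucc _, _ => 0

/-- Transport of `BX` along equalities of the indices. -/
noncomputable def BXcast {r s r' s' : ℤ} (h1 : r = r') (h2 : s = s') :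
    BX U W r s ≃ₗ[ℂ] BX U W r' s' := by
  subst h1; subst h2; exact LinearEquiv.refl ℂ _

section Aux

variable {V M : Type} [AddCommGroup V] [Module ℂ V] [AddCommGroup M] [Module ℂ M]

lemma contract_mem (f : Module.Dual ℂ V) (n : ℕ) :
    ∀ x ∈ ⋀[ℂ]^(n+1) V, CliffordAlgebra.contractLeft f x ∈ ⋀[ℂ]^n V := by
  induction n with
  | zero =>
      intro x hx
      rw [show ⋀[ℂ]^(0+1) V = LinearMap.range (ExteriorAlgebra.ι ℂ (M := V)) ^ 1 from rfl,
        pow_one] at hx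
      obtain ⟨v, rfl⟩ := hx
      rw [show (ExteriorAlgebra.ι ℂ v : ExteriorAlgebra ℂ V) = CliffordAlgebra.ι _ v from rfl,
        CliffordAlgebra.contractLeft_ι]
      rw [show ⋀[ℂ]^0 V = (1 : Submodule ℂ (ExteriorAlgebra ℂ V)) from pow_zero _,
        Submodule.one_eq_range]
      exact ⟨f v, rfl⟩
  | succ n ih =>
      intro x hx
      have hx' : x ∈ LinearMap.range (ExteriorAlgebra.ι ℂ (M := V)) * ⋀[ℂ]^(n+1) V := by
        rw [show ⋀[ℂ]^(n+1+1) V = LinearMap.range (ExteriorAlgebra.ι ℂ (M := V)) ^ (n+1+1)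
          from rfl, pow_succ'] at hx
        exact hx
      refine Submodule.mul_induction_on hx' ?_ ?_
      · rintro m ⟨v, rfl⟩ y hy
        rw [show (ExteriorAlgebra.ι ℂ v : ExteriorAlgebra ℂ V) = CliffordAlgebra.ι _ v from rfl,
          CliffordAlgebra.contractLeft_ι_mul]
        refine Submodule.sub_mem _ (Submodule.smul_mem _ _ hy) ?_
        have h2 := Submodule.mul_mem_mul (LinearMap.mem_range_self (ExteriorAlgebra.ι ℂ (M := V)) v)
          (ih _ hy)
        rwa [← pow_succ'] at h2
      · intro a b ha hb
        rw [map_add]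
        exact Submodule.add_mem _ ha hb

/-- Interior product (contraction) `f ⌟ -` on exterior powers, the homotopy for `Lmul`. -/
noncomputable def Hmul (f : Module.Dual ℂ V) (n : ℕ) : ⋀[ℂ]^(n+1) V →ₗ[ℂ] ⋀[ℂ]^n V :=
  (CliffordAlgebra.contractLeft f).restrict (contract_mem f n)

lemma homot (α : V) (f : Module.Dual ℂ V) (hf : f α = 1) (n : ℕ) (x : ⋀[ℂ]^(n+1) V) :
    Lmul α n (Hmul f n x) + Hmul f (n+1) (Lmul α (n+1) x) = x := by
  apply Subtype.ext
  show ExteriorAlgebra.ι ℂ α * CliffordAlgebra.contractLeft f (x : ExteriorAlgebra ℂ V)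
      + CliffordAlgebra.contractLeft f (ExteriorAlgebra.ι ℂ α * (x : ExteriorAlgebra ℂ V))
      = (x : ExteriorAlgebra ℂ V)
  rw [show (ExteriorAlgebra.ι ℂ α : ExteriorAlgebra ℂ V) = CliffordAlgebra.ι _ α from rfl,
    CliffordAlgebra.contractLeft_ι_mul, hf, one_smul]
  abel

lemma homot0 (α : V) (f : Module.Dual ℂ V) (hf : f α = 1) (x : ⋀[ℂ]^0 V) :
    Hmul f 0 (Lmul α 0 x) = x := by
  apply Subtype.ext
  show CliffordAlgebra.contractLeft f (ExteriorAlgebra.ι ℂ α * (x : ExteriorAlgebra ℂ V))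
      = (x : ExteriorAlgebra ℂ V)
  have hx : (x : ExteriorAlgebra ℂ V) ∈ (1 : Submodule ℂ (ExteriorAlgebra ℂ V)) := by
    have h0 : ⋀[ℂ]^0 V ≤ (1 : Submodule ℂ (ExteriorAlgebra ℂ V)) := le_of_eq (pow_zero _)
    exact h0 x.2
  rw [Submodule.one_eq_range] at hx
  obtain ⟨c, hc⟩ := hx
  rw [show (ExteriorAlgebra.ι ℂ α : ExteriorAlgebra ℂ V) = CliffordAlgebra.ι _ α from rfl,
    CliffordAlgebra.contractLeft_ι_mul, hf, one_smul, ← hc]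
  rw [show (Algebra.linearMap ℂ (ExteriorAlgebra ℂ V)) c = algebraMap ℂ _ c from rfl,
    CliffordAlgebra.contractLeft_algebraMap, mul_zero, sub_zero]

end Aux

section Tensor

variable {V M : Type} [AddCommGroup V] [Module ℂ V] [AddCommGroup M] [Module ℂ M]

lemma homL_map (α : V) (f : Module.Dual ℂ V) (hf : f α = 1) (j : ℕ) :
    (TensorProduct.map (Lmul α j) (LinearMap.id (M := M))).comp
        (TensorProduct.map (Hmul f j) LinearMap.id)
      + (TensorProduct.map (Hmul f (j+1)) LinearMap.id).comp
        (TensorProduct.map (Lmul α (j+1)) LinearMap.id)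
      = LinearMap.id := by
  apply TensorProduct.ext'
  intro x y
  simp only [LinearMap.add_apply, LinearMap.comp_apply, TensorProduct.map_tmul,
    LinearMap.id_apply]
  rw [← TensorProduct.add_tmul, homot α f hf j x]

lemma homL0_map (α : V) (f : Module.Dual ℂ V) (hf : f α = 1) :
    (TensorProduct.map (Hmul f 0) (LinearMap.id (M := M))).comp
        (TensorProduct.map (Lmul α 0) LinearMap.id)
      = LinearMap.id := by
  apply TensorProduct.ext'
  intro x y
  simp only [LinearMap.comp_apply, TensorProduct.map_tmul, LinearMap.id_apply]
  rw [homot0 α f hf x]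

lemma homR_map (β : V) (g : Module.Dual ℂ V) (hg : g β = 1) (k : ℕ) :
    (TensorProduct.map (LinearMap.id (M := M)) (Lmul β k)).comp
        (TensorProduct.map LinearMap.id (Hmul g k))
      + (TensorProduct.map LinearMap.id (Hmul g (k+1))).comp
        (TensorProduct.map LinearMap.id (Lmul β (k+1)))
      = LinearMap.id := by
  apply TensorProduct.ext'
  intro x y
  simp only [LinearMap.add_apply, LinearMap.comp_apply, TensorProduct.map_tmul,
    LinearMap.id_apply]
  rw [← TensorProduct.tmul_add, homot β g hg k y]

lemma homR0_map (β : V) (g : Module.Dual ℂ V) (hg : g β = 1) :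
    (TensorProduct.map (LinearMap.id (M := M)) (Hmul g 0)).comp
        (TensorProduct.map LinearMap.id (Lmul β 0))
      = LinearMap.id := by
  apply TensorProduct.ext'
  intro x y
  simp only [LinearMap.comp_apply, TensorProduct.map_tmul, LinearMap.id_apply]
  rw [homot0 β g hg y]

lemma map_comm {A B C D : Type} [AddCommGroup A] [Module ℂ A] [AddCommGroup B] [Module ℂ B]
    [AddCommGroup C] [Module ℂ C] [AddCommGroup D] [Module ℂ D]
    (p : A →ₗ[ℂ] B) (q : C →ₗ[ℂ] D) (z : A ⊗[ℂ] C) :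
    TensorProduct.map p LinearMap.id (TensorProduct.map LinearMap.id q z)
      = TensorProduct.map LinearMap.id q (TensorProduct.map p LinearMap.id z) := by
  have : (TensorProduct.map p LinearMap.id).comp (TensorProduct.map LinearMap.id q)
      = (TensorProduct.map LinearMap.id q).comp (TensorProduct.map p (LinearMap.id (M := C))) := by
    apply TensorProduct.ext'
    intro x y
    simp [TensorProduct.map_tmul]
  exact LinearMap.congr_fun this z

lemma exactL0 (α : V) (f : Module.Dual ℂ V) (hf : f α = 1) (τ : (⋀[ℂ]^0 V) ⊗[ℂ] M)
    (h : TensorProduct.map (Lmul α 0) LinearMap.id τ = 0) : τ = 0 := by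
  have h2 := LinearMap.congr_fun (homL0_map α f hf (M := M)) τ
  rw [LinearMap.comp_apply, h, map_zero, LinearMap.id_apply] at h2
  exact h2.symm

lemma exactL_succ (α : V) (f : Module.Dual ℂ V) (hf : f α = 1) (j : ℕ)
    (τ : (⋀[ℂ]^(j+1) V) ⊗[ℂ] M)
    (h : TensorProduct.map (Lmul α (j+1)) LinearMap.id τ = 0) :
    τ = TensorProduct.map (Lmul α j) LinearMap.id
        (TensorProduct.map (Hmul f j) LinearMap.id τ) := by
  have h2 := LinearMap.congr_fun (homL_map α f hf j (M := M)) τ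
  rw [LinearMap.add_apply, LinearMap.comp_apply, LinearMap.comp_apply, h, map_zero, add_zero,
    LinearMap.id_apply] at h2
  exact h2.symm

lemma homR_succ (β : V) (g : Module.Dual ℂ V) (hg : g β = 1) (k : ℕ)
    (ω : M ⊗[ℂ] (⋀[ℂ]^(k+1) V)) :
    ω = TensorProduct.map LinearMap.id (Lmul β k)
          (TensorProduct.map LinearMap.id (Hmul g k) ω)
      + TensorProduct.map LinearMap.id (Hmul g (k+1))
          (TensorProduct.map LinearMap.id (Lmul β (k+1)) ω) := by
  have h2 := LinearMap.congr_fun (homR_map β g hg k (M := M)) ω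
  rw [LinearMap.add_apply, LinearMap.comp_apply, LinearMap.comp_apply, LinearMap.id_apply] at h2
  exact h2.symm

lemma homR_zero (β : V) (g : Module.Dual ℂ V) (hg : g β = 1)
    (ω : M ⊗[ℂ] (⋀[ℂ]^0 V)) :
    ω = TensorProduct.map LinearMap.id (Hmul g 0)
        (TensorProduct.map LinearMap.id (Lmul β 0) ω) := by
  have h2 := LinearMap.congr_fun (homR0_map β g hg (M := M)) ω
  rw [LinearMap.comp_apply, LinearMap.id_apply] at h2
  exact h2.symm

end Tensor

lemma BXcast_trans {r₁ r₂ r₃ s₁ s₂ s₃ : ℤ} (h1 : r₁ = r₂) (h2 : s₁ = s₂) (h3 : r₂ = r₃)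
    (h4 : s₂ = s₃) (x : BX U W r₁ s₁) :
    BXcast h3 h4 (BXcast h1 h2 x) = BXcast (h1.trans h3) (h2.trans h4) x := by
  subst h1; subst h2; subst h3; subst h4; rfl

lemma Bd1_cast (α : U) {r r' s : ℤ} (h : r = r') (x : BX U W r s) :
    Bd1 α r' s (BXcast h rfl x) = BXcast (congrArg (· + 1) h) rfl (Bd1 α r s x) := by
  subst h; rfl

lemma Bd2u_cast (β : W) {r s s' : ℤ} (h : s = s') (x : BX U W r s) :
    Bd2u β r s' (BXcast rfl h x) = BXcast rfl (congrArg (· + 1) h) (Bd2u β r s x) := by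
  subst h; rfl

/-- Exactness of the symbol complex of the Schweitzer complex in the Aeppli degree:
if `ω ∈ Λ^a U ⊗ Λ^b W` satisfies `L_α L_β ω = 0` (for `α, β` nonzero), then
`ω = L_α η₁ + L_β η₂` for some `η₁ ∈ Λ^{a-1} U ⊗ Λ^b W` and `η₂ ∈ Λ^a U ⊗ Λ^{b-1} W`. -/
theorem symbol_exact_aeppli_degree (U W : Type) [AddCommGroup U] [Module ℂ U]
    [AddCommGroup W] [Module ℂ W] [FiniteDimensional ℂ U] [FiniteDimensional ℂ W]
    (α : U) (β : W) (hα : α ≠ 0) (hβ : β ≠ 0) (a b : ℤ) (ha : 0 ≤ a) (hb : 0 ≤ b)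
    (ω : BX U W a b) (h : Bd1 α a (b + 1) (Bd2u β a b ω) = 0) :
    ∃ (η₁ : BX U W (a - 1) b) (η₂ : BX U W a (b - 1)),
      ω = BXcast (show a - 1 + 1 = a by omega) rfl (Bd1 α (a - 1) b η₁)
        + BXcast rfl (show b - 1 + 1 = b by omega) (Bd2u β a (b - 1) η₂) := by
  obtain ⟨f, hf⟩ : ∃ f : Module.Dual ℂ U, f α = 1 := by
    have h1 : ¬ ∀ φ : Module.Dual ℂ U, φ α = 0 := by
      rw [Module.forall_dual_apply_eq_zero_iff]; exact hα
    push_neg at h1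
    obtain ⟨φ, hφ⟩ := h1
    exact ⟨(φ α)⁻¹ • φ, by simp [LinearMap.smul_apply, inv_mul_cancel₀ hφ]⟩
  obtain ⟨g, hg⟩ : ∃ g : Module.Dual ℂ W, g β = 1 := by
    have h1 : ¬ ∀ φ : Module.Dual ℂ W, φ β = 0 := by
      rw [Module.forall_dual_apply_eq_zero_iff]; exact hβ
    push_neg at h1
    obtain ⟨φ, hφ⟩ := h1
    exact ⟨(φ β)⁻¹ • φ, by simp [LinearMap.smul_apply, inv_mul_cancel₀ hφ]⟩
  obtain ⟨a', rfl⟩ : ∃ n : ℕ, a = (n : ℤ) := ⟨a.toNat, (Int.toNat_of_nonneg ha).symm⟩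
  obtain ⟨b', rfl⟩ : ∃ n : ℕ, b = (n : ℤ) := ⟨b.toNat, (Int.toNat_of_nonneg hb).symm⟩
  rcases a' with _ | j <;> rcases b' with _ | k
  · -- a = 0, b = 0
    have hω : TensorProduct.map (Lmul α 0) LinearMap.id
        (TensorProduct.map (LinearMap.id (M := ⋀[ℂ]^0 U)) (Lmul β 0) ω) = 0 := h
    have hτ : TensorProduct.map (LinearMap.id (M := ⋀[ℂ]^0 U)) (Lmul β 0) ω = 0 :=
      exactL0 α f hf _ hω
    refine ⟨0, 0, ?_⟩
    rw [map_zero, map_zero, map_zero, map_zero, add_zero]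
    have h2 := homR_zero β g hg (M := ⋀[ℂ]^0 U)
      (ω : (⋀[ℂ]^0 U) ⊗[ℂ] ⋀[ℂ]^0 W)
    rw [hτ, map_zero] at h2
    exact h2
  · -- a = 0, b = k+1
    have hω : TensorProduct.map (Lmul α 0) LinearMap.id
        (TensorProduct.map (LinearMap.id (M := ⋀[ℂ]^0 U)) (Lmul β (k+1)) ω) = 0 := h
    have hτ : TensorProduct.map (LinearMap.id (M := ⋀[ℂ]^0 U)) (Lmul β (k+1)) ω = 0 :=
      exactL0 α f hf _ hω
    have hdec := homR_succ β g hg k (M := ⋀[ℂ]^0 U)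
      (ω : (⋀[ℂ]^0 U) ⊗[ℂ] ⋀[ℂ]^(k+1) W)
    rw [hτ, map_zero, add_zero] at hdec
    have e₂ : ((k : ℕ) : ℤ) = ((k+1 : ℕ) : ℤ) - 1 := by push_cast; ring
    refine ⟨0, BXcast rfl e₂
      ((TensorProduct.map LinearMap.id (Hmul g k) ω : (⋀[ℂ]^0 U) ⊗[ℂ] ⋀[ℂ]^k W) :
        BX U W ((0 : ℕ) : ℤ) ((k : ℕ) : ℤ)), ?_⟩
    erw [map_zero, zero_add, Bd2u_cast, BXcast_trans]
    exact hdec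
  · -- a = j+1, b = 0
    have hω : TensorProduct.map (Lmul α (j+1)) LinearMap.id
        (TensorProduct.map (LinearMap.id (M := ⋀[ℂ]^(j+1) U)) (Lmul β 0) ω) = 0 := h
    have hτd := exactL_succ α f hf j _ hω
    have hdec := homR_zero β g hg (M := ⋀[ℂ]^(j+1) U)
      (ω : (⋀[ℂ]^(j+1) U) ⊗[ℂ] ⋀[ℂ]^0 W)
    rw [hτd, ← map_comm] at hdec
    have e₁ : ((j : ℕ) : ℤ) = ((j+1 : ℕ) : ℤ) - 1 := by push_cast; ring
    refine ⟨BXcast e₁ rfl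
      ((TensorProduct.map LinearMap.id (Hmul g 0)
        (TensorProduct.map (Hmul f j) LinearMap.id
          (TensorProduct.map LinearMap.id (Lmul β 0) ω)) :
            (⋀[ℂ]^j U) ⊗[ℂ] ⋀[ℂ]^0 W) :
        BX U W ((j : ℕ) : ℤ) ((0 : ℕ) : ℤ)), 0, ?_⟩
    erw [map_zero, add_zero, Bd1_cast, BXcast_trans]
    exact hdec
  · -- a = j+1, b = k+1
    have hω : TensorProduct.map (Lmul α (j+1)) LinearMap.id
        (TensorProduct.map (LinearMap.id (M := ⋀[ℂ]^(j+1) U)) (Lmul β (k+1)) ω) = 0 := h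
    have hτd := exactL_succ α f hf j _ hω
    have hdec := homR_succ β g hg k (M := ⋀[ℂ]^(j+1) U)
      (ω : (⋀[ℂ]^(j+1) U) ⊗[ℂ] ⋀[ℂ]^(k+1) W)
    have e1 := (congrArg
      (fun z => TensorProduct.map (LinearMap.id (M := ⋀[ℂ]^(j+1) U)) (Hmul g (k+1)) z)
      hτd).trans (map_comm (Lmul α j) (Hmul g (k+1)) _).symm
    have hdec2 := hdec.trans (congrArg
      (fun z => TensorProduct.map LinearMap.id (Lmul β k)
        (TensorProduct.map LinearMap.id (Hmul g k)
          (ω : (⋀[ℂ]^(j+1) U) ⊗[ℂ] ⋀[ℂ]^(k+1) W)) + z) e1)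
    have e₁ : ((j : ℕ) : ℤ) = ((j+1 : ℕ) : ℤ) - 1 := by push_cast; ring
    have e₂ : ((k : ℕ) : ℤ) = ((k+1 : ℕ) : ℤ) - 1 := by push_cast; ring
    refine ⟨BXcast e₁ rfl
      ((TensorProduct.map LinearMap.id (Hmul g (k+1))
        (TensorProduct.map (Hmul f j) LinearMap.id
          (TensorProduct.map LinearMap.id (Lmul β (k+1)) ω)) :
            (⋀[ℂ]^j U) ⊗[ℂ] ⋀[ℂ]^(k+1) W) :
        BX U W ((j : ℕ) : ℤ) ((k+1 : ℕ) : ℤ)),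
      BXcast rfl e₂
      ((TensorProduct.map LinearMap.id (Hmul g k) ω : (⋀[ℂ]^(j+1) U) ⊗[ℂ] ⋀[ℂ]^k W) :
        BX U W ((j+1 : ℕ) : ℤ) ((k : ℕ) : ℤ)), ?_⟩
    erw [Bd1_cast, Bd2u_cast, BXcast_trans, BXcast_trans]
    exact hdec2.trans (add_comm _ _)
end
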